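/- Let G be a graph, v a vertex of G, and (H, η) an extended strip decomposition of G - v. Suppose P is a path in H of length at least 1 such that every edge e of P is v-safe, meaning there is a path in the induced subgraph G[η(e)] minus N[v] from η(e, x) to η(e, y) where x, y are the endpoints of e. Then there exists an induced path Q in G - N[v] of length at least |V(P)| - 2 that starts in η(e1, p1) where e1 is the first edge of P and p1 its first vertex, and ends in η(e_last, p_last) where e_last is the last edge of P and p_last its last vertex. -/

import Mathlib

namespace SimpleGraph.Walk

variable {V : Type*} {G : SimpleGraph V}

lemma getVert_transfer' {u w : V} (p : G.Walk u w) {G' : SimpleGraph V} (h) (i : ℕ) :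
    (p.transfer G' h).getVert i = p.getVert i := by
  induction p generalizing i with
  | nil => rfl
  | cons ha p ih =>
    cases i with
    | zero => rfl
    | succ n => exact ih _ n

lemma exists_walk_getVert' {u w : V} (p : G.Walk u w) (i : ℕ) :
    ∃ q : G.Walk u (p.getVert i), q.length ≤ i := by
  induction p generalizing i with
  | nil => exact ⟨Walk.nil, Nat.zero_le i⟩
  | cons ha p ih =>
    cases i with
    | zero => exact ⟨Walk.nil, Nat.zero_le 0⟩
    | succ n =>
      obtain ⟨r, hr⟩ := ih n
      exact ⟨(Walk.cons ha r).copy rfl (getVert_cons_succ p ha).symm, by simpa using hr⟩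

lemma getVert_inj' {u w : V} (p : G.Walk u w) (hp : p.IsPath) :
    ∀ i j, i ≤ p.length → j ≤ p.length → p.getVert i = p.getVert j → i = j := by
  induction p with
  | nil => intro i j hi hj _; simp only [length_nil, Nat.le_zero] at hi hj; omega
  | cons ha q ih =>
    intro i j hi hj hij
    rw [cons_isPath_iff] at hp
    cases i with
    | zero =>
      cases j with
      | zero => rfl
      | succ n =>
        exfalso
        rw [getVert_zero, getVert_cons_succ] at hij
        exact hp.2 (mem_support_iff_exists_getVert.mpr
          ⟨n, hij.symm, by simpa [Nat.succ_le_succ_iff] using hj⟩)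
    | succ m =>
      cases j with
      | zero =>
        exfalso
        rw [getVert_cons_succ, getVert_zero] at hij
        exact hp.2 (mem_support_iff_exists_getVert.mpr
          ⟨m, hij, by simpa [Nat.succ_le_succ_iff] using hi⟩)
      | succ n =>
        rw [getVert_cons_succ, getVert_cons_succ] at hij
        have := ih hp.1 m n (by simpa [Nat.succ_le_succ_iff] using hi)
          (by simpa [Nat.succ_le_succ_iff] using hj) hij
        omega

end SimpleGraph.Walk

/-- A triangle in a graph `H`. -/
def IsTriangle {W : Type*} (H : SimpleGraph W) (x y z : W) : Prop :=
  H.Adj x y ∧ H.Adj y z ∧ H.Adj x z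

/-- An extended strip decomposition of the part `U ⊆ V(G)` of a graph `G`, with host
graph `H`.  `vmap x = η(x)`, `emap x y = η(xy)`, `imap x y = η(xy, x)` and
`tmap x y z = η(xyz)`.  The sets partition `U`, interfaces around a common vertex are
complete to each other, and every edge of `G` inside `U` is of one of the allowed types. -/
structure ExtStripDecomp {V W : Type*} (G : SimpleGraph V) (H : SimpleGraph W)
    (U : Set V) where
  vmap : W → Set V
  emap : W → W → Set V
  imap : W → W → Set V
  tmap : W → W → W → Set V
  emap_symm : ∀ x y, emap x y = emap y x
  tmap_symm₁ : ∀ x y z, tmap x y z = tmap y x z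
  tmap_symm₂ : ∀ x y z, tmap x y z = tmap x z y
  vmap_sub : ∀ x, vmap x ⊆ U
  emap_sub : ∀ x y, emap x y ⊆ U
  tmap_sub : ∀ x y z, tmap x y z ⊆ U
  imap_sub : ∀ x y, imap x y ⊆ emap x y
  emap_empty_of_not_adj : ∀ x y, ¬ H.Adj x y → emap x y = ∅
  tmap_empty_of_not_tri : ∀ x y z, ¬ IsTriangle H x y z → tmap x y z = ∅
  cover : ∀ u ∈ U, (∃ x, u ∈ vmap x) ∨ (∃ x y, u ∈ emap x y) ∨ ∃ x y z, u ∈ tmap x y z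
  vmap_disj : ∀ x x', x ≠ x' → Disjoint (vmap x) (vmap x')
  ve_disj : ∀ x y z, Disjoint (vmap x) (emap y z)
  vt_disj : ∀ x a b c, Disjoint (vmap x) (tmap a b c)
  et_disj : ∀ x y a b c, Disjoint (emap x y) (tmap a b c)
  ee_disj : ∀ x y a b, s(x, y) ≠ s(a, b) → Disjoint (emap x y) (emap a b)
  tt_disj : ∀ x y z a b c, ({x, y, z} : Set W) ≠ {a, b, c} →
    Disjoint (tmap x y z) (tmap a b c)
  interfaces_complete : ∀ x y z, H.Adj x y → H.Adj x z → y ≠ z →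
    ∀ u ∈ imap x y, ∀ v ∈ imap x z, G.Adj u v
  edge_rule : ∀ u v, u ∈ U → v ∈ U → G.Adj u v →
    (∃ x, u ∈ vmap x ∧ v ∈ vmap x) ∨
    (∃ x y, u ∈ emap x y ∧ v ∈ emap x y) ∨
    (∃ x y z, u ∈ tmap x y z ∧ v ∈ tmap x y z) ∨
    (∃ x y z, H.Adj x y ∧ H.Adj x z ∧ u ∈ imap x y ∧ v ∈ imap x z) ∨
    (∃ x y, H.Adj x y ∧
      ((u ∈ imap x y ∧ v ∈ vmap x) ∨ (v ∈ imap x y ∧ u ∈ vmap x))) ∨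
    (∃ x y z, (u ∈ tmap x y z ∧ v ∈ imap x y ∧ v ∈ imap y x) ∨
      (v ∈ tmap x y z ∧ u ∈ imap x y ∧ u ∈ imap y x))

/-- A rigid extended strip decomposition: for every edge `xy` of `H` the sets `η(xy)`,
`η(xy, x)` and `η(xy, y)` are nonempty. -/
def ExtStripDecomp.Rigid {V W : Type*} {G : SimpleGraph V} {H : SimpleGraph W} {U : Set V}
    (D : ExtStripDecomp G H U) : Prop :=
  ∀ x y, H.Adj x y →
    (D.emap x y).Nonempty ∧ (D.imap x y).Nonempty ∧ (D.imap y x).Nonempty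

/-- Let `(H, η)` be an extended strip decomposition of `G - v` and `P` a path in `H` of
length at least `1` all of whose edges are `v`-safe (for each edge `xy` of `P` there is a
path inside `G[η(xy)] - N[v]` from `η(xy, x)` to `η(xy, y)`).  Then there is an induced
path `Q` in `G - N[v]` of length at least `|V(P)| - 2` which starts in `η(e₁, p₁)` (the
interface of the first edge of `P` at its first vertex) and ends in `η(e_last, p_last)`. -/
theorem safe_path_lifts_to_induced_path {V W : Type*} (G : SimpleGraph V)
    (H : SimpleGraph W) (v : V) (D : ExtStripDecomp G H {u : V | u ≠ v})
    {x y : W} (P : H.Walk x y) (hP : P.IsPath) (hlen : 1 ≤ P.length)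
    (hsafe : ∀ i, i < P.length →
      ∃ a ∈ D.imap (P.getVert i) (P.getVert (i + 1)),
        ∃ b ∈ D.imap (P.getVert (i + 1)) (P.getVert i),
          ∃ q : G.Walk a b, ∀ u ∈ q.support,
            u ∈ D.emap (P.getVert i) (P.getVert (i + 1)) ∧ u ≠ v ∧ ¬ G.Adj v u) :
    ∃ (a b : V) (q : G.Walk a b), q.IsPath ∧
      (∀ u ∈ q.support, u ≠ v ∧ ¬ G.Adj v u) ∧
      (∀ i j : ℕ, i + 1 < j → j ≤ q.length → ¬ G.Adj (q.getVert i) (q.getVert j)) ∧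
      P.length - 1 ≤ q.length ∧
      a ∈ D.imap x (P.getVert 1) ∧
      b ∈ D.imap y (P.getVert (P.length - 1)) := by
  classical
  choose a ha b hb q hq using hsafe
  have h0 : 0 < P.length := hlen
  have hklt : P.length - 1 < P.length := by omega
  -- injectivity of getVert on indices
  have INJ : ∀ i j, i ≤ P.length → j ≤ P.length → P.getVert i = P.getVert j → i = j :=
    P.getVert_inj' hP
  have SYM2 : ∀ i j, i < P.length → j < P.length →
      s(P.getVert i, P.getVert (i+1)) = s(P.getVert j, P.getVert (j+1)) → i = j := by
    intro i j hi hj h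
    rw [Sym2.eq_iff] at h
    rcases h with ⟨h1, h2⟩ | ⟨h1, h2⟩
    · exact INJ i j hi.le hj.le h1
    · have e1 := INJ i (j+1) hi.le hj h1
      have e2 := INJ (i+1) j hi hj.le h2
      omega
  have EMAPNE : ∀ (x' y' : W) i, i < P.length → ∀ u : V, u ∈ D.emap x' y' →
      u ∈ D.emap (P.getVert i) (P.getVert (i+1)) →
      s(x', y') = s(P.getVert i, P.getVert (i+1)) := by
    intro x' y' i hi u h1 h2
    by_contra hne
    exact Set.disjoint_left.mp (D.ee_disj _ _ _ _ hne) h1 h2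
  have UNIQ : ∀ i j (hi : i < P.length) (hj : j < P.length) (u : V),
      u ∈ (q i hi).support → u ∈ (q j hj).support → i = j := by
    intro i j hi hj u h1 h2
    exact SYM2 i j hi hj (EMAPNE _ _ i hi u (hq j hj u h2).1 (hq i hi u h1).1).symm
  have ADJ : ∀ i j (hi : i < P.length) (hj : j < P.length) (u w : V),
      u ∈ (q i hi).support → w ∈ (q j hj).support → G.Adj u w → i ≤ j + 1 := by
    intro i j hi hj u w hu hw hadj
    obtain ⟨hue, hune, -⟩ := hq i hi u hu
    obtain ⟨hwe, hwne, -⟩ := hq j hj w hw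
    rcases D.edge_rule u w hune hwne hadj with
      ⟨x', h1, h2⟩ | ⟨x', y', h1, h2⟩ | ⟨x', y', z', h1, h2⟩ |
      ⟨c, y', z', hcy, hcz, h1, h2⟩ | ⟨x', y', hxy, h⟩ | ⟨x', y', z', h⟩
    · exact (Set.disjoint_left.mp (D.ve_disj x' _ _) h1 hue).elim
    · have s1 := EMAPNE x' y' i hi u h1 hue
      have s2 := EMAPNE x' y' j hj w h2 hwe
      have := SYM2 i j hi hj (s1.symm.trans s2)
      omega
    · exact absurd h1 (Set.disjoint_left.mp (D.et_disj _ _ _ _ _) hue)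
    · have s1 := EMAPNE c y' i hi u (D.imap_sub c y' h1) hue
      have s2 := EMAPNE c z' j hj w (D.imap_sub c z' h2) hwe
      rw [Sym2.eq_iff] at s1 s2
      rcases s1 with ⟨hc1, -⟩ | ⟨hc1, -⟩ <;> rcases s2 with ⟨hc2, -⟩ | ⟨hc2, -⟩
      · have := INJ i j hi.le hj.le (hc1.symm.trans hc2); omega
      · have := INJ i (j+1) hi.le hj (hc1.symm.trans hc2); omega
      · have := INJ (i+1) j hi hj.le (hc1.symm.trans hc2); omega
      · have := INJ (i+1) (j+1) hi hj (hc1.symm.trans hc2); omega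
    · rcases h with ⟨-, h2⟩ | ⟨-, h2⟩
      · exact (Set.disjoint_left.mp (D.ve_disj x' _ _) h2 hwe).elim
      · exact (Set.disjoint_left.mp (D.ve_disj x' _ _) h2 hue).elim
    · rcases h with ⟨h1, -, -⟩ | ⟨h1, -, -⟩
      · exact absurd h1 (Set.disjoint_left.mp (D.et_disj _ _ _ _ _) hue)
      · exact absurd h1 (Set.disjoint_left.mp (D.et_disj _ _ _ _ _) hwe)
  -- the union of the strips' paths
  set S : Set V := {u | ∃ (i : ℕ) (hi : i < P.length), u ∈ (q i hi).support} with hS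
  let G' : SimpleGraph V :=
    { Adj := fun u w => u ∈ S ∧ w ∈ S ∧ G.Adj u w
      symm := ⟨fun u w h => ⟨h.2.1, h.1, h.2.2.symm⟩⟩
      loopless := ⟨fun u h => G.loopless.irrefl u h.2.2⟩ }
  have hG'le : G' ≤ G := fun {u w} h => h.2.2
  have hQtrans : ∀ (i : ℕ) (hi : i < P.length), ∀ e ∈ (q i hi).edges, e ∈ G'.edgeSet := by
    intro i hi e he
    induction e using Sym2.ind with
    | _ u' w' =>
      exact ⟨⟨i, hi, (q i hi).fst_mem_support_of_mem_edges he⟩,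
        ⟨i, hi, (q i hi).snd_mem_support_of_mem_edges he⟩, (q i hi).adj_of_mem_edges he⟩
  -- reachability from a 0 to b i in G'
  have key : ∀ i, ∀ (hi : i < P.length), Nonempty (G'.Walk (a 0 h0) (b i hi)) := by
    intro i
    induction i with
    | zero => intro hi; exact ⟨(q 0 hi).transfer G' (hQtrans 0 hi)⟩
    | succ n ihn =>
      intro hi
      have hn : n < P.length := by omega
      obtain ⟨Wn⟩ := ihn hn
      have hadj : G.Adj (b n hn) (a (n+1) hi) := by
        refine D.interfaces_complete (P.getVert (n+1)) (P.getVert n) (P.getVert (n+2))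
          (P.adj_getVert_succ hn).symm (P.adj_getVert_succ hi) ?_ _ (hb n hn) _ (ha (n+1) hi)
        intro hPe
        have := INJ n (n+2) (by omega) (by omega) hPe
        omega
      have hmemb : b n hn ∈ S := ⟨n, hn, SimpleGraph.Walk.end_mem_support _⟩
      have hmema : a (n+1) hi ∈ S := ⟨n+1, hi, SimpleGraph.Walk.start_mem_support _⟩
      exact ⟨Wn.append (SimpleGraph.Walk.cons ⟨hmemb, hmema, hadj⟩
        ((q (n+1) hi).transfer G' (hQtrans (n+1) hi)))⟩
  obtain ⟨W0⟩ := key (P.length - 1) hklt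
  obtain ⟨Q0, hQ0path, hQ0len⟩ := (SimpleGraph.Reachable.exists_path_of_dist ⟨W0⟩)
  -- chord-freeness of Q0 in G'
  have hchord : ∀ i j, i + 1 < j → j ≤ Q0.length →
      ¬ G'.Adj (Q0.getVert i) (Q0.getVert j) := by
    intro i j hij hj hadj
    obtain ⟨w1, hw1⟩ := Q0.exists_walk_getVert' i
    obtain ⟨w2, hw2⟩ := Q0.reverse.exists_walk_getVert' (Q0.length - j)
    have hE : Q0.reverse.getVert (Q0.length - j) = Q0.getVert j := by
      rw [SimpleGraph.Walk.getVert_reverse]; congr 1; omega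
    have hd := G'.dist_le (w1.append (SimpleGraph.Walk.cons hadj (w2.copy rfl hE).reverse))
    rw [← hQ0len] at hd
    simp only [SimpleGraph.Walk.length_append, SimpleGraph.Walk.length_cons,
      SimpleGraph.Walk.length_reverse, SimpleGraph.Walk.length_copy] at hd
    omega
  -- strip index grows by at most one along Q0
  have hmono : ∀ i, i ≤ Q0.length →
      ∃ m, ∃ (hm : m < P.length), Q0.getVert i ∈ (q m hm).support ∧ m ≤ i := by
    intro i
    induction i with
    | zero =>
      intro _
      exact ⟨0, h0, by
        rw [SimpleGraph.Walk.getVert_zero]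
        exact SimpleGraph.Walk.start_mem_support _, le_refl 0⟩
    | succ n ihn =>
      intro hni
      obtain ⟨m, hm, hmem, hle⟩ := ihn (by omega)
      have hadj : G'.Adj (Q0.getVert n) (Q0.getVert (n+1)) :=
        Q0.adj_getVert_succ (by omega)
      obtain ⟨m', hm', hmem'⟩ : Q0.getVert (n+1) ∈ S := hadj.2.1
      have hstep : m' ≤ m + 1 := ADJ m' m hm' hm _ _ hmem' hmem hadj.2.2.symm
      exact ⟨m', hm', hmem', by omega⟩
  -- length lower bound
  have hlow : P.length - 1 ≤ Q0.length := by
    obtain ⟨m, hm, hmem, hle⟩ := hmono Q0.length le_rfl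
    have hend : Q0.getVert Q0.length = b (P.length - 1) hklt :=
      SimpleGraph.Walk.getVert_length _
    have hbend : b (P.length - 1) hklt ∈ (q (P.length - 1) hklt).support :=
      SimpleGraph.Walk.end_mem_support _
    have := UNIQ m (P.length - 1) hm hklt _ (hend ▸ hmem) hbend
    omega
  -- transfer back to G
  have hedges : ∀ e ∈ Q0.edges, e ∈ G.edgeSet :=
    fun e he => SimpleGraph.edgeSet_mono hG'le (Q0.edges_subset_edgeSet he)
  have hsupp : ∀ u ∈ Q0.support, u ≠ v ∧ ¬ G.Adj v u := by
    intro u hu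
    obtain ⟨n, rfl, hn⟩ := SimpleGraph.Walk.mem_support_iff_exists_getVert.mp hu
    obtain ⟨m, hm, hmem, -⟩ := hmono n hn
    exact (hq m hm _ hmem).2
  refine ⟨a 0 h0, b (P.length - 1) hklt, Q0.transfer G hedges,
    hQ0path.transfer hedges, ?_, ?_, ?_, ?_, ?_⟩
  · rw [SimpleGraph.Walk.support_transfer]
    exact hsupp
  · intro i j hij hjle hGadj
    rw [SimpleGraph.Walk.length_transfer] at hjle
    rw [SimpleGraph.Walk.getVert_transfer', SimpleGraph.Walk.getVert_transfer'] at hGadj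
    obtain ⟨mi, hmi, hmemi, -⟩ := hmono i (by omega)
    obtain ⟨mj, hmj, hmemj, -⟩ := hmono j hjle
    exact hchord i j hij hjle ⟨⟨mi, hmi, hmemi⟩, ⟨mj, hmj, hmemj⟩, hGadj⟩
  · rw [SimpleGraph.Walk.length_transfer]; exact hlow
  · have := ha 0 h0
    rwa [SimpleGraph.Walk.getVert_zero] at this
  · have := hb (P.length - 1) hklt
    have hk1 : P.length - 1 + 1 = P.length := by omega
    rwa [hk1, SimpleGraph.Walk.getVert_length] at this
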